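/- Let m, n ∈ ℕ with 0 < m < n. Then ∑_{i=1}^m (en/i)^i < (n/(n-m)) · (en/m)^m. -/

import Mathlib

open Finset

theorem sum_en_div_i_pow_lt (m n : ℕ) (hm : 0 < m) (hmn : m < n) :
    ∑ i ∈ Finset.Icc 1 m, (Real.exp 1 * n / i) ^ i <
      ((n : ℝ) / ((n : ℝ) - m)) * (Real.exp 1 * n / m) ^ m := by
  set e : ℝ := Real.exp 1 with he
  have hepos : 0 < e := Real.exp_pos 1
  have hn0 : 0 < n := hm.trans hmn
  have hnR : (0:ℝ) < n := by exact_mod_cast hn0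
  have hmR : (0:ℝ) < m := by exact_mod_cast hm
  have hmnR : (m:ℝ) < n := by exact_mod_cast hmn
  set r : ℝ := (m:ℝ)/n with hr
  have hr0 : 0 < r := div_pos hmR hnR
  have hr1 : r < 1 := (div_lt_one hnR).2 hmnR
  -- step lemma
  have step : ∀ i : ℕ, 1 ≤ i → i < m →
      (e * n / i) ^ i ≤ r * (e * n / ((i:ℝ)+1)) ^ (i+1) := by
    intro i hi1 him
    have hiR : (0:ℝ) < i := by exact_mod_cast hi1
    have hi1R : (0:ℝ) < (i:ℝ)+1 := by positivity
    have hkey : (((i:ℝ)+1)/i) ^ i ≤ e := by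
      have h1 : (1:ℝ)/i + 1 ≤ Real.exp (1/i) := Real.add_one_le_exp _
      have h2 : ((1:ℝ)/i + 1) ^ i ≤ Real.exp (1/i) ^ i :=
        pow_le_pow_left₀ (by positivity) h1 i
      have h3 : Real.exp (1/(i:ℝ)) ^ i = e := by
        rw [← Real.exp_nat_mul]
        congr 1
        field_simp
      rw [h3] at h2
      have h4 : ((i:ℝ)+1)/i = 1/i + 1 := by field_simp; ring
      rw [h4]; exact h2
    have hkey2 : ((i:ℝ)+1)^(i+1) ≤ e * m * (i:ℝ)^i := by
      have h5 : ((i:ℝ)+1)^i ≤ e * (i:ℝ)^i := by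
        rw [div_pow] at hkey
        exact (div_le_iff₀ (pow_pos hiR i)).1 hkey
      have him1 : ((i:ℝ)+1) ≤ m := by exact_mod_cast him
      calc ((i:ℝ)+1)^(i+1) = ((i:ℝ)+1) * ((i:ℝ)+1)^i := by rw [pow_succ]; ring
        _ ≤ (m:ℝ) * (e * (i:ℝ)^i) := mul_le_mul him1 h5 (by positivity) hmR.le
        _ = e * m * (i:ℝ)^i := by ring
    rw [div_pow, div_pow, hr, div_mul_div_comm,
      div_le_div_iff₀ (pow_pos hiR i) (by positivity)]
    calc (e*(n:ℝ))^i * ((n:ℝ) * ((i:ℝ)+1)^(i+1))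
        = (n:ℝ) * (((i:ℝ)+1)^(i+1) * (e*(n:ℝ))^i) := by ring
      _ ≤ (n:ℝ) * ((e * m * (i:ℝ)^i) * (e*(n:ℝ))^i) := by
          apply mul_le_mul_of_nonneg_left _ hnR.le
          exact mul_le_mul_of_nonneg_right hkey2 (by positivity)
      _ = (m:ℝ) * (e*(n:ℝ))^(i+1) * (i:ℝ)^i := by rw [pow_succ]; ring
  -- chain lemma
  have chain : ∀ j i : ℕ, 1 ≤ i → i + j = m →
      (e * n / i) ^ i ≤ (e * n / m) ^ m * r ^ j := by
    intro j
    induction j with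
    | zero =>
      intro i hi hij
      have : i = m := by omega
      subst this
      simp
    | succ j ih =>
      intro i hi hij
      have him : i < m := by omega
      have h1 := step i hi him
      have h2 := ih (i+1) (by omega) (by omega)
      push_cast at h2
      calc (e * n / i) ^ i ≤ r * (e * n / ((i:ℝ)+1)) ^ (i+1) := h1
        _ ≤ r * ((e * n / m) ^ m * r ^ j) := mul_le_mul_of_nonneg_left h2 hr0.le
        _ = (e * n / m) ^ m * r ^ (j+1) := by ring
  have hsum : ∑ i ∈ Icc 1 m, (e * n / i) ^ i ≤
      (e * n / m) ^ m * ∑ j ∈ range m, r ^ j := by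
    calc ∑ i ∈ Icc 1 m, (e * n / i) ^ i
        ≤ ∑ i ∈ Icc 1 m, (e * n / m) ^ m * r ^ (m - i) := by
          apply sum_le_sum
          intro i hi
          rw [mem_Icc] at hi
          exact chain (m - i) i hi.1 (by omega)
      _ = (e * n / m) ^ m * ∑ i ∈ Icc 1 m, r ^ (m - i) := by rw [← mul_sum]
      _ = (e * n / m) ^ m * ∑ j ∈ range m, r ^ j := by
          congr 1
          rw [← Finset.Ico_add_one_right_eq_Icc, Finset.sum_Ico_eq_sum_range]
          norm_num
          rw [← Finset.sum_range_reflect (fun j => r ^ j) m]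
          apply Finset.sum_congr rfl
          intro i hi
          congr 1
          omega
  have hgeom : ∑ j ∈ range m, r ^ j < (n:ℝ) / ((n:ℝ) - m) := by
    have hne : r ≠ 1 := ne_of_lt hr1
    have h1r : 0 < 1 - r := by linarith
    rw [geom_sum_eq hne]
    have heq : (r ^ m - 1)/(r - 1) = (1 - r ^ m)/(1 - r) := by
      rw [show (1:ℝ) - r ^ m = -(r ^ m - 1) by ring,
        show (1:ℝ) - r = -(r - 1) by ring, neg_div_neg_eq]
    rw [heq]
    have hnd : (n:ℝ)/((n:ℝ) - m) = 1/(1 - r) := by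
      have h5 : 1 - r = ((n:ℝ) - m)/n := by rw [hr]; field_simp
      rw [h5, one_div_div]
    rw [hnd, div_lt_div_iff₀ h1r h1r]
    have : 0 < r ^ m := pow_pos hr0 m
    nlinarith
  have hfm : 0 < (e * n / m) ^ m := by positivity
  calc ∑ i ∈ Icc 1 m, (e * n / i) ^ i
      ≤ (e * n / m) ^ m * ∑ j ∈ range m, r ^ j := hsum
    _ < (e * n / m) ^ m * ((n:ℝ) / ((n:ℝ) - m)) := by
        exact mul_lt_mul_of_pos_left hgeom hfm
    _ = ((n:ℝ) / ((n:ℝ) - m)) * (e * n / m) ^ m := mul_comm _ _
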